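/- For 0 < κ < √(3/2), the amplitude a(x,0) = |κ² − 1 + √(1 − κ²/2)·cos(θ(x))| / (1 − √(1 − κ²/2)·cos(θ(x))) (with θ(x) = κ r₀ √(γ/β) x and r₀ = 1) has zeros, namely at x where cos(θ(x)) = (1 − κ²)/√(1 − κ²/2), and this value lies in [−1, 1]. -/
import Mathlib

/-- For 0 < κ < √(3/2), the SFB amplitude a(x,0) (with r₀ = 1) has zeros, namely
where cos(θ(x)) = (1 − κ²)/√(1 − κ²/2), and this value lies in [−1, 1]. -/
theorem stmt_10 (β γ κ : ℝ) (hβ : 0 < β) (hγ : 0 < γ)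
    (h₁ : 0 < κ) (h₂ : κ < Real.sqrt (3 / 2)) :
    (1 - κ ^ 2) / Real.sqrt (1 - κ ^ 2 / 2) ∈ Set.Icc (-1 : ℝ) 1 ∧
    ∃ x : ℝ, Real.cos (κ * Real.sqrt (γ / β) * x) = (1 - κ ^ 2) / Real.sqrt (1 - κ ^ 2 / 2) ∧
      |κ ^ 2 - 1 + Real.sqrt (1 - κ ^ 2 / 2) * Real.cos (κ * Real.sqrt (γ / β) * x)| /
        (1 - Real.sqrt (1 - κ ^ 2 / 2) * Real.cos (κ * Real.sqrt (γ / β) * x)) = 0 := by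
  have hκ2 : κ ^ 2 < 3 / 2 := by
    have := Real.sq_sqrt (by norm_num : (3/2 : ℝ) ≥ 0)
    nlinarith [Real.sqrt_nonneg (3/2 : ℝ)]
  have hpos : (0 : ℝ) < 1 - κ ^ 2 / 2 := by linarith
  set s := Real.sqrt (1 - κ ^ 2 / 2) with hs
  have hs2 : s ^ 2 = 1 - κ ^ 2 / 2 := Real.sq_sqrt hpos.le
  have hspos : 0 < s := Real.sqrt_pos.mpr hpos
  have habs : |1 - κ ^ 2| ≤ s := by
    rw [abs_le]
    constructor <;> nlinarith [sq_nonneg κ, sq_nonneg (κ^2)]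
  have hmem : (1 - κ ^ 2) / s ∈ Set.Icc (-1 : ℝ) 1 := by
    constructor
    · rw [le_div_iff₀ hspos]
      nlinarith [abs_le.mp habs]
    · rw [div_le_one hspos]
      nlinarith [abs_le.mp habs]
  refine ⟨hmem, ?_⟩
  have hc : 0 < κ * Real.sqrt (γ / β) := by
    positivity
  refine ⟨Real.arccos ((1 - κ ^ 2) / s) / (κ * Real.sqrt (γ / β)), ?_, ?_⟩
  · rw [mul_div_cancel₀ _ hc.ne', Real.cos_arccos hmem.1 hmem.2]
  · rw [mul_div_cancel₀ _ hc.ne', Real.cos_arccos hmem.1 hmem.2,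
      mul_div_cancel₀ _ hspos.ne']
    simp
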